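/- Let A be a commutative ring and let B be an A-algebra such that every maximal ideal of A is the preimage of some prime ideal of B (equivalently, all closed points of Spec A are contained in the image of Spec B → Spec A). Let M₁ → M₂ → M₃ be homomorphisms of finite projective A-modules whose composite M₁ → M₃ is zero, and suppose that the base-changed sequence 0 → M₁ ⊗_A B → M₂ ⊗_A B → M₃ ⊗_A B → 0 is a short exact sequence. Then 0 → M₁ → M₂ → M₃ → 0 is also a short exact sequence. -/

import Mathlib

open TensorProduct

lemma aux_subsingleton_of_baseChange
    {A B : Type*} [CommRing A] [CommRing B] [Algebra A B]
    (hmax : ∀ I : Ideal A, I.IsMaximal →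
      ∃ Q : Ideal B, Q.IsPrime ∧ Q.comap (algebraMap A B) = I)
    (M : Type*) [AddCommGroup M] [Module A M] [Module.Finite A M]
    (h : Subsingleton (B ⊗[A] M)) : Subsingleton M := by
  by_contra hns
  rw [not_subsingleton_iff_nontrivial] at hns
  have h1 : (⊤ : Submodule A M).annihilator ≠ ⊤ := by
    intro htop
    obtain ⟨x, y, hxy⟩ := hns
    have h1m : (1 : A) ∈ (⊤ : Submodule A M).annihilator := htop ▸ Submodule.mem_top
    have hx0 := Submodule.mem_annihilator.mp h1m x Submodule.mem_top
    have hy0 := Submodule.mem_annihilator.mp h1m y Submodule.mem_top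
    rw [one_smul] at hx0 hy0
    exact hxy (hx0.trans hy0.symm)
  obtain ⟨m, hm, hle⟩ := Ideal.exists_le_maximal _ h1
  obtain ⟨Q, hQ, hQm⟩ := hmax m hm
  haveI := hQ
  haveI := hm
  -- m•⊤ ≠ ⊤ by Nakayama
  have hne : (m • ⊤ : Submodule A M) ≠ ⊤ := by
    intro htop
    obtain ⟨r, hr1, hr0⟩ :=
      Submodule.exists_sub_one_mem_and_smul_eq_zero_of_fg_of_le_smul m ⊤
        (Module.Finite.fg_top) (le_of_eq htop.symm)
    have hrm : r ∈ m := hle (Submodule.mem_annihilator.mpr fun x hx => hr0 x hx)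
    have : (1 : A) ∈ m := by
      have := m.sub_mem hrm hr1
      simpa using this
    exact hm.ne_top (m.eq_top_iff_one.mpr this)
  obtain ⟨x, hx⟩ : ∃ x : M, x ∉ (m • ⊤ : Submodule A M) := by
    by_contra hc
    push_neg at hc
    exact hne (Submodule.eq_top_iff'.mpr hc)
  letI : Field (A ⧸ m) := Ideal.Quotient.field m
  set W := M ⧸ (m • ⊤ : Submodule A M) with hW
  have hw : (Submodule.Quotient.mk x : W) ≠ 0 := by
    rwa [ne_eq, Submodule.Quotient.mk_eq_zero]
  obtain ⟨φ, hφ⟩ : ∃ φ : Module.Dual (A ⧸ m) W, φ (Submodule.Quotient.mk x) ≠ 0 := by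
    by_contra hc
    push_neg at hc
    exact hw ((Module.forall_dual_apply_eq_zero_iff (A ⧸ m) _).mp hc)
  -- the ring map (A⧸m) →+* (B⧸Q)
  have hle' : m ≤ Q.comap (algebraMap A B) := le_of_eq hQm.symm
  set e : (A ⧸ m) →+* (B ⧸ Q) := Ideal.quotientMap Q (algebraMap A B) hle' with he
  -- χ : M →ₗ[A] B⧸Q
  set χ : M →ₗ[A] (B ⧸ Q) :=
    { toFun := fun y => e (φ (Submodule.Quotient.mk y))
      map_add' := by intro y z; rw [← map_add, ← map_add]; rfl
      map_smul' := by
        intro a y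
        have h1 : (Submodule.Quotient.mk (a • y) : W)
            = (Ideal.Quotient.mk m a) • (Submodule.Quotient.mk y : W) := rfl
        simp only [h1, map_smul, smul_eq_mul, map_mul, RingHom.id_apply]
        rw [Ideal.quotientMap_mk, Algebra.smul_def]
        congr 1 } with hχ
  have hχx : χ x ≠ 0 := by
    have : Function.Injective e := RingHom.injective e
    simp only [hχ, LinearMap.coe_mk, AddHom.coe_mk]
    intro hzero
    exact hφ (this (by simpa using hzero))
  -- bilinear map
  set bil : B →ₗ[A] M →ₗ[A] (B ⧸ Q) :=
    LinearMap.mk₂ A (fun b y => Ideal.Quotient.mk Q b * χ y)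
      (fun b₁ b₂ y => by rw [map_add, add_mul])
      (fun a b y => by
        rw [Algebra.smul_def, map_mul, Ideal.Quotient.mk_algebraMap, mul_assoc,
          ← Algebra.smul_def])
      (fun b y₁ y₂ => by rw [map_add, mul_add])
      (fun a b y => by rw [map_smul, mul_smul_comm]) with hbil
  set Ψ : B ⊗[A] M →ₗ[A] (B ⧸ Q) := TensorProduct.lift bil with hΨ
  have h0 : ((1 : B) ⊗ₜ[A] x : B ⊗[A] M) = 0 := Subsingleton.elim _ _
  have : χ x = 0 := by
    have := congrArg Ψ h0
    simpa [hΨ, hbil] using this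
  exact hχx this

private lemma bc_surj_aux {A B : Type*} [CommRing A] [CommRing B] [Algebra A B]
    {N P : Type*} [AddCommGroup N] [AddCommGroup P] [Module A N] [Module A P]
    (h : N →ₗ[A] P) (hh : Function.Surjective h) :
    Function.Surjective (h.baseChange B) := by
  rw [LinearMap.baseChange_eq_ltensor]
  exact LinearMap.lTensor_surjective B hh


/-- Lemma 2.5.4 of the paper.
Let `B` be an `A`-algebra such that every maximal ideal of `A` is the preimage of a prime of
`B`.  If a sequence `M₁ → M₂ → M₃` of finite projective `A`-modules with zero composite becomes
a short exact sequence after base change to `B`, then it is itself a short exact sequence. -/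
theorem shortExact_of_shortExact_baseChange
    {A B : Type*} [CommRing A] [CommRing B] [Algebra A B]
    (hmax : ∀ I : Ideal A, I.IsMaximal →
      ∃ Q : Ideal B, Q.IsPrime ∧ Q.comap (algebraMap A B) = I)
    {M₁ M₂ M₃ : Type*}
    [AddCommGroup M₁] [AddCommGroup M₂] [AddCommGroup M₃]
    [Module A M₁] [Module A M₂] [Module A M₃]
    [Module.Finite A M₁] [Module.Finite A M₂] [Module.Finite A M₃]
    [Module.Projective A M₁] [Module.Projective A M₂] [Module.Projective A M₃]
    (f : M₁ →ₗ[A] M₂) (g : M₂ →ₗ[A] M₃)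
    (hfg : g.comp f = 0)
    (hinj : Function.Injective (f.baseChange B))
    (hexact : Function.Exact (f.baseChange B) (g.baseChange B))
    (hsurj : Function.Surjective (g.baseChange B)) :
    Function.Injective f ∧ Function.Exact f g ∧ Function.Surjective g := by
  classical
  -- Step 1 : g is surjective
  have hgsurj : Function.Surjective g := by
    set p : M₃ →ₗ[A] (M₃ ⧸ LinearMap.range g) := (LinearMap.range g).mkQ with hp
    have hsub : Subsingleton (B ⊗[A] (M₃ ⧸ LinearMap.range g)) := by
      refine subsingleton_of_forall_eq 0 fun w => ?_
      obtain ⟨z, rfl⟩ := bc_surj_aux p (LinearMap.range g).mkQ_surjective w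
      obtain ⟨w', rfl⟩ := hsurj z
      have hpg : p.comp g = 0 := by
        ext x
        simp [hp, Submodule.Quotient.mk_eq_zero]
      rw [← LinearMap.comp_apply, ← LinearMap.baseChange_comp, hpg,
        LinearMap.baseChange_zero, LinearMap.zero_apply]
    have := aux_subsingleton_of_baseChange hmax _ hsub
    rw [← LinearMap.range_eq_top]
    exact Submodule.Quotient.subsingleton_iff.mp this
  -- Step 2 : splitting of g
  obtain ⟨s, hs⟩ := Module.projective_lifting_property g LinearMap.id hgsurj
  set K : Submodule A M₂ := LinearMap.ker g with hK
  set ι : K →ₗ[A] M₂ := K.subtype with hι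
  have hgπ : ∀ x : M₂, g x - g (s (g x)) = 0 := by
    intro x
    have := LinearMap.congr_fun hs (g x)
    simp only [LinearMap.comp_apply, LinearMap.id_apply] at this
    rw [this, sub_self]
  set π' : M₂ →ₗ[A] K := (LinearMap.id - s ∘ₗ g).codRestrict K
    (fun x => by simpa [hK, LinearMap.mem_ker, map_sub] using hgπ x) with hπ'
  have hπι : π'.comp ι = LinearMap.id := by
    ext ⟨x, hx⟩
    have hgx : g x = 0 := hx
    simp [hπ', hι, LinearMap.codRestrict, hgx]
  have hπsurj : Function.Surjective π' := fun k =>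
    ⟨ι k, by rw [← LinearMap.comp_apply, hπι, LinearMap.id_apply]⟩
  have hιinjB : Function.Injective (ι.baseChange B) := by
    intro u v huv
    have h1 := congrArg (π'.baseChange B) huv
    rwa [← LinearMap.comp_apply, ← LinearMap.comp_apply, ← LinearMap.baseChange_comp, hπι,
      LinearMap.baseChange_id, LinearMap.id_apply, LinearMap.id_apply] at h1
  have hgι : g.comp ι = 0 := by
    ext ⟨x, hx⟩
    exact hx
  set f' : M₁ →ₗ[A] K := f.codRestrict K
    (fun x => by simpa [hK, LinearMap.mem_ker] using LinearMap.congr_fun hfg x) with hf'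
  have hιf' : ι.comp f' = f := LinearMap.subtype_comp_codRestrict f K _
  -- base change of f' is surjective
  have hf'Bsurj : Function.Surjective (f'.baseChange B) := by
    intro y
    have h1 : (g.baseChange B) ((ι.baseChange B) y) = 0 := by
      rw [← LinearMap.comp_apply, ← LinearMap.baseChange_comp, hgι,
        LinearMap.baseChange_zero, LinearMap.zero_apply]
    obtain ⟨z, hz⟩ := (hexact _).mp h1
    refine ⟨z, hιinjB ?_⟩
    rw [← LinearMap.comp_apply, ← LinearMap.baseChange_comp, hιf']
    exact hz
  haveI hKfin : Module.Finite A K := Module.Finite.of_surjective π' hπsurj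
  -- Step 3 : range f' = ⊤
  have hf'top : LinearMap.range f' = ⊤ := by
    set q : K →ₗ[A] (K ⧸ LinearMap.range f') := (LinearMap.range f').mkQ with hq
    have hsub : Subsingleton (B ⊗[A] (K ⧸ LinearMap.range f')) := by
      refine subsingleton_of_forall_eq 0 fun w => ?_
      obtain ⟨z, rfl⟩ := bc_surj_aux q (LinearMap.range f').mkQ_surjective w
      obtain ⟨w', rfl⟩ := hf'Bsurj z
      have hqf : q.comp f' = 0 := by
        ext x
        simp [hq, Submodule.Quotient.mk_eq_zero]
      rw [← LinearMap.comp_apply, ← LinearMap.baseChange_comp, hqf,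
        LinearMap.baseChange_zero, LinearMap.zero_apply]
    have := aux_subsingleton_of_baseChange hmax _ hsub
    exact Submodule.Quotient.subsingleton_iff.mp this
  have hrange : LinearMap.range f = K := by
    rw [← hιf', LinearMap.range_comp, hf'top, Submodule.map_top, Submodule.range_subtype]
  -- Step 4 : injectivity of f
  haveI hKproj : Module.Projective A K := Module.Projective.of_split ι π' hπι
  have hf'surj : Function.Surjective f' := by
    rw [← LinearMap.range_eq_top]
    exact hf'top
  obtain ⟨t, ht⟩ := Module.projective_lifting_property f' LinearMap.id hf'surj
  set K' : Submodule A M₁ := LinearMap.ker f' with hK'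
  set κ : K' →ₗ[A] M₁ := K'.subtype with hκ
  have hf'p1 : ∀ x : M₁, f' x - f' (t (f' x)) = 0 := by
    intro x
    have := LinearMap.congr_fun ht (f' x)
    simp only [LinearMap.comp_apply, LinearMap.id_apply] at this
    rw [this, sub_self]
  set p1 : M₁ →ₗ[A] K' := (LinearMap.id - t ∘ₗ f').codRestrict K'
    (fun x => by simpa [hK', LinearMap.mem_ker, map_sub] using hf'p1 x) with hp1
  have hp1κ : p1.comp κ = LinearMap.id := by
    ext ⟨x, hx⟩
    have hfx : f' x = 0 := hx
    simp [hp1, hκ, LinearMap.codRestrict, hfx]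
  have hp1surj : Function.Surjective p1 := fun k =>
    ⟨κ k, by rw [← LinearMap.comp_apply, hp1κ, LinearMap.id_apply]⟩
  have hκinjB : Function.Injective (κ.baseChange B) := by
    intro u v huv
    have h1 := congrArg (p1.baseChange B) huv
    rwa [← LinearMap.comp_apply, ← LinearMap.comp_apply, ← LinearMap.baseChange_comp, hp1κ,
      LinearMap.baseChange_id, LinearMap.id_apply, LinearMap.id_apply] at h1
  have hf'Binj : Function.Injective (f'.baseChange B) := by
    intro u v huv
    apply hinj
    rw [← hιf', LinearMap.baseChange_comp, LinearMap.comp_apply, LinearMap.comp_apply, huv]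
  have hf'κ : f'.comp κ = 0 := by
    ext ⟨x, hx⟩
    have hfx : f' x = 0 := hx
    simp [hκ, hfx]
  have hsubK' : Subsingleton (B ⊗[A] K') := by
    refine subsingleton_of_forall_eq 0 fun w => ?_
    apply hκinjB
    apply hf'Binj
    rw [← LinearMap.comp_apply, ← LinearMap.baseChange_comp, hf'κ, LinearMap.baseChange_zero]
    simp
  haveI hK'fin : Module.Finite A K' := Module.Finite.of_surjective p1 hp1surj
  have hK'sub := aux_subsingleton_of_baseChange hmax _ hsubK'
  have hkerf' : LinearMap.ker f' = ⊥ := Submodule.eq_bot_of_subsingleton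
  have hfinj : Function.Injective f := by
    intro x y hxy
    have : ι (f' x) = ι (f' y) := hxy
    have h2 : f' x = f' y := Submodule.injective_subtype K this
    have := LinearMap.ker_eq_bot.mp hkerf' h2
    exact this
  refine ⟨hfinj, ?_, hgsurj⟩
  rw [LinearMap.exact_iff]
  exact hrange.symm
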